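/- arXiv:2511.15604 — 3 statements merged into one kernel-verified Lean document; each statement's English description precedes it below -/
import Mathlib

section
/- The assignment x_i ↦ x_i, (i,i+1) ↦ s_i := τ_i(x_i − x_{i+1}) − 1 defines a morphism of algebras from the smash product k[x_1,…,x_n] ⋊ S_n (with the symmetric group acting by permuting variables) to the nil affine Hecke algebra H_n. -/
open scoped TensorProduct

namespace NilHecke

variable (k : Type) [Field k]

/-- Relations of the nil affine Hecke algebra `H n` (0-based indices: generators
`x_0,…,x_{n-1}` and `τ_0,…,τ_{n-2}`; out-of-range generators are killed). -/
inductive Rel (n : ℕ) : FreeAlgebra k (ℕ ⊕ ℕ) → FreeAlgebra k (ℕ ⊕ ℕ) → Prop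
  | xkill (i : ℕ) (h : n ≤ i) : Rel n (FreeAlgebra.ι k (.inl i)) 0
  | tkill (i : ℕ) (h : n ≤ i + 1) : Rel n (FreeAlgebra.ι k (.inr i)) 0
  | tsq (i : ℕ) : Rel n (FreeAlgebra.ι k (.inr i) * FreeAlgebra.ι k (.inr i)) 0
  | braid (i : ℕ) :
      Rel n (FreeAlgebra.ι k (.inr i) * FreeAlgebra.ι k (.inr (i+1)) * FreeAlgebra.ι k (.inr i))
        (FreeAlgebra.ι k (.inr (i+1)) * FreeAlgebra.ι k (.inr i) * FreeAlgebra.ι k (.inr (i+1)))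
  | tcomm (i j : ℕ) (h : i + 1 < j) :
      Rel n (FreeAlgebra.ι k (.inr i) * FreeAlgebra.ι k (.inr j))
        (FreeAlgebra.ι k (.inr j) * FreeAlgebra.ι k (.inr i))
  | xcomm (i j : ℕ) :
      Rel n (FreeAlgebra.ι k (.inl i) * FreeAlgebra.ι k (.inl j))
        (FreeAlgebra.ι k (.inl j) * FreeAlgebra.ι k (.inl i))
  | txcomm (i j : ℕ) (h1 : j ≠ i) (h2 : j ≠ i + 1) :
      Rel n (FreeAlgebra.ι k (.inr i) * FreeAlgebra.ι k (.inl j))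
        (FreeAlgebra.ι k (.inl j) * FreeAlgebra.ι k (.inr i))
  | tx (i : ℕ) (h : i + 1 < n) :
      Rel n (FreeAlgebra.ι k (.inr i) * FreeAlgebra.ι k (.inl i)
          - FreeAlgebra.ι k (.inl (i+1)) * FreeAlgebra.ι k (.inr i)) 1
  | xt (i : ℕ) (h : i + 1 < n) :
      Rel n (FreeAlgebra.ι k (.inl i) * FreeAlgebra.ι k (.inr i)
          - FreeAlgebra.ι k (.inr i) * FreeAlgebra.ι k (.inl (i+1))) 1

/-- The nil affine Hecke algebra on `n` strands over `k`. -/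
def H (n : ℕ) : Type := RingQuot (Rel k n)

instance (n : ℕ) : Ring (H k n) := inferInstanceAs (Ring (RingQuot (Rel k n)))

instance (n : ℕ) : Algebra k (H k n) := inferInstanceAs (Algebra k (RingQuot (Rel k n)))

/-- The polynomial generator `x_{i+1}` (0-based `x_i`). -/
def X (n i : ℕ) : H k n := RingQuot.mkAlgHom k (Rel k n) (FreeAlgebra.ι k (.inl i))

/-- The nil Hecke generator `τ_{i+1}` (0-based `τ_i`). -/
def T (n i : ℕ) : H k n := RingQuot.mkAlgHom k (Rel k n) (FreeAlgebra.ι k (.inr i))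

/-- The element `s_i = τ_i (x_i - x_{i+1}) - 1`. -/
def s (n i : ℕ) : H k n := T k n i * (X k n i - X k n (i+1)) - 1

/-- The ascending product `τ_a τ_{a+1} ⋯ τ_{b-1}` (0-based). -/
def chain (n a b : ℕ) : H k n := (List.map (T k n) (List.range' a (b - a))).prod

theorem X_kill (n i : ℕ) (h : n ≤ i) : X k n i = 0 := by
  have h' := RingQuot.mkAlgHom_rel k (Rel.xkill (k := k) (n := n) i h)
  simp only [map_zero] at h'
  exact h'

theorem T_kill (n i : ℕ) (h : n ≤ i + 1) : T k n i = 0 := by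
  have h' := RingQuot.mkAlgHom_rel k (Rel.tkill (k := k) (n := n) i h)
  simp only [map_zero] at h'
  exact h'

theorem T_sq (n i : ℕ) : T k n i * T k n i = 0 := by
  have h' := RingQuot.mkAlgHom_rel k (Rel.tsq (k := k) (n := n) i)
  simp only [map_mul, map_zero] at h'
  exact h'

theorem T_braid (n i : ℕ) :
    T k n i * T k n (i+1) * T k n i = T k n (i+1) * T k n i * T k n (i+1) := by
  have h' := RingQuot.mkAlgHom_rel k (Rel.braid (k := k) (n := n) i)
  simp only [map_mul] at h'
  exact h'

theorem T_comm (n i j : ℕ) (h : i + 1 < j) : T k n i * T k n j = T k n j * T k n i := by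
  have h' := RingQuot.mkAlgHom_rel k (Rel.tcomm (k := k) (n := n) i j h)
  simp only [map_mul] at h'
  exact h'

theorem X_comm (n i j : ℕ) : X k n i * X k n j = X k n j * X k n i := by
  have h' := RingQuot.mkAlgHom_rel k (Rel.xcomm (k := k) (n := n) i j)
  simp only [map_mul] at h'
  exact h'

theorem TX_comm (n i j : ℕ) (h1 : j ≠ i) (h2 : j ≠ i + 1) :
    T k n i * X k n j = X k n j * T k n i := by
  have h' := RingQuot.mkAlgHom_rel k (Rel.txcomm (k := k) (n := n) i j h1 h2)
  simp only [map_mul] at h'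
  exact h'

theorem TX (n i : ℕ) (h : i + 1 < n) :
    T k n i * X k n i - X k n (i+1) * T k n i = 1 := by
  have h' := RingQuot.mkAlgHom_rel k (Rel.tx (k := k) (n := n) i h)
  simp only [map_mul, map_sub, map_one] at h'
  exact h'

theorem XT (n i : ℕ) (h : i + 1 < n) :
    X k n i * T k n i - T k n i * X k n (i+1) = 1 := by
  have h' := RingQuot.mkAlgHom_rel k (Rel.xt (k := k) (n := n) i h)
  simp only [map_mul, map_sub, map_one] at h'
  exact h'

/-- The inclusion `H m → H n` for `m ≤ n`. -/
def incl (m n : ℕ) (h : m ≤ n) : H k m →ₐ[k] H k n :=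
  RingQuot.liftAlgHom k ⟨FreeAlgebra.lift k (fun g =>
    match g with
    | .inl i => if i < m then X k n i else 0
    | .inr i => if i + 1 < m then T k n i else 0), by
      rintro a b r
      induction r with
      | xkill i h' => simp only [FreeAlgebra.lift_ι_apply, map_zero]; rw [if_neg (by omega)]
      | tkill i h' => simp only [FreeAlgebra.lift_ι_apply, map_zero]; rw [if_neg (by omega)]
      | tsq i =>
          simp only [map_mul, FreeAlgebra.lift_ι_apply, map_zero]
          split_ifs <;> simp [T_sq]
      | braid i =>
          simp only [map_mul, FreeAlgebra.lift_ι_apply]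
          split_ifs <;> simp [T_braid]
      | tcomm i j h' =>
          simp only [map_mul, FreeAlgebra.lift_ι_apply]
          split_ifs <;> simp [T_comm k n i j h']
      | xcomm i j =>
          simp only [map_mul, FreeAlgebra.lift_ι_apply]
          split_ifs <;> simp [X_comm k n i j]
      | txcomm i j h1 h2 =>
          simp only [map_mul, FreeAlgebra.lift_ι_apply]
          split_ifs <;> simp [TX_comm k n i j h1 h2]
      | tx i h' =>
          simp only [map_sub, map_mul, map_one, FreeAlgebra.lift_ι_apply]
          rw [if_pos h', if_pos (by omega : i < m), if_pos (by omega : i + 1 < m)]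
          exact TX k n i (by omega)
      | xt i h' =>
          simp only [map_sub, map_mul, map_one, FreeAlgebra.lift_ι_apply]
          rw [if_pos (by omega : i < m), if_pos h', if_pos h']
          exact XT k n i (by omega)⟩

/-- The shift embedding `H m → H n` (sending `x_i ↦ x_{i+1}`, `τ_i ↦ τ_{i+1}`). -/
def shj (m n : ℕ) (h : m + 1 ≤ n ∨ m = 0) : H k m →ₐ[k] H k n :=
  RingQuot.liftAlgHom k ⟨FreeAlgebra.lift k (fun g =>
    match g with
    | .inl i => if i < m then X k n (i+1) else 0
    | .inr i => if i + 1 < m then T k n (i+1) else 0), by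
      rintro a b r
      induction r with
      | xkill i h' => simp only [FreeAlgebra.lift_ι_apply, map_zero]; rw [if_neg (by omega)]
      | tkill i h' => simp only [FreeAlgebra.lift_ι_apply, map_zero]; rw [if_neg (by omega)]
      | tsq i =>
          simp only [map_mul, FreeAlgebra.lift_ι_apply, map_zero]
          split_ifs <;> simp [T_sq]
      | braid i =>
          simp only [map_mul, FreeAlgebra.lift_ι_apply]
          split_ifs <;> simp [T_braid]
      | tcomm i j h' =>
          simp only [map_mul, FreeAlgebra.lift_ι_apply]
          split_ifs <;> simp [T_comm k n (i+1) (j+1) (by omega)]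
      | xcomm i j =>
          simp only [map_mul, FreeAlgebra.lift_ι_apply]
          split_ifs <;> simp [X_comm k n (i+1) (j+1)]
      | txcomm i j h1 h2 =>
          simp only [map_mul, FreeAlgebra.lift_ι_apply]
          split_ifs <;> simp [TX_comm k n (i+1) (j+1) (by omega) (by omega)]
      | tx i h' =>
          simp only [map_sub, map_mul, map_one, FreeAlgebra.lift_ι_apply]
          rw [if_pos h', if_pos (by omega : i < m), if_pos (by omega : i + 1 < m)]
          exact TX k n (i+1) (by omega)
      | xt i h' =>
          simp only [map_sub, map_mul, map_one, FreeAlgebra.lift_ι_apply]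
          rw [if_pos (by omega : i < m), if_pos h', if_pos h']
          exact XT k n (i+1) (by omega)⟩

end NilHecke

namespace NilHecke

section RingAux
variable {R : Type} [Ring R] (a b u v w z : R)

/-- s² = 1 -/
theorem sq_aux (hau : a*u = v*a + 1) (hav : a*v = u*a - 1) (ha : a*a = 0)
    (huv : v*u = u*v) :
    (a*(u-v)-1) * (a*(u-v)-1) = 1 := by
  have hau' : ∀ c, a*(u*c) = v*(a*c) + c := fun c => by rw [← mul_assoc, hau, add_mul, one_mul, mul_assoc]
  have hav' : ∀ c, a*(v*c) = u*(a*c) - c := fun c => by rw [← mul_assoc, hav, sub_mul, one_mul, mul_assoc]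
  have huv' : ∀ c, v*(u*c) = u*(v*c) := fun c => by rw [← mul_assoc, huv, mul_assoc]
  have ha' : ∀ c, a*(a*c) = 0 := fun c => by rw [← mul_assoc, ha, zero_mul]
  simp only [mul_sub, sub_mul, mul_add, add_mul, mul_one, one_mul, mul_assoc]
  simp only [hau', hav', huv', ha', hau, hav, huv, ha,
    mul_sub, sub_mul, mul_add, add_mul, mul_one, one_mul, mul_zero, zero_mul, sub_zero, zero_sub,
    zero_add, add_zero]
  noncomm_ring

theorem braid_aux (hab : a*b*a = b*a*b) (ha : a*a = 0) (hb : b*b = 0)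
    (hau : a*u = v*a + 1) (hav : a*v = u*a - 1)
    (haw : a*w = w*a) (hbu : b*u = u*b)
    (hbv : b*v = w*b + 1) (hbw : b*w = v*b - 1)
    (huv : v*u = u*v) (huw : w*u = u*w) (hvw : w*v = v*w) :
    (a*(u-v)-1) * (b*(v-w)-1) * (a*(u-v)-1) = (b*(v-w)-1) * (a*(u-v)-1) * (b*(v-w)-1) := by
  have hau' : ∀ c, a*(u*c) = v*(a*c) + c := fun c => by rw [← mul_assoc, hau, add_mul, one_mul, mul_assoc]
  have hav' : ∀ c, a*(v*c) = u*(a*c) - c := fun c => by rw [← mul_assoc, hav, sub_mul, one_mul, mul_assoc]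
  have haw' : ∀ c, a*(w*c) = w*(a*c) := fun c => by rw [← mul_assoc, haw, mul_assoc]
  have hbu' : ∀ c, b*(u*c) = u*(b*c) := fun c => by rw [← mul_assoc, hbu, mul_assoc]
  have hbv' : ∀ c, b*(v*c) = w*(b*c) + c := fun c => by rw [← mul_assoc, hbv, add_mul, one_mul, mul_assoc]
  have hbw' : ∀ c, b*(w*c) = v*(b*c) - c := fun c => by rw [← mul_assoc, hbw, sub_mul, one_mul, mul_assoc]
  have huv' : ∀ c, v*(u*c) = u*(v*c) := fun c => by rw [← mul_assoc, huv, mul_assoc]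
  have huw' : ∀ c, w*(u*c) = u*(w*c) := fun c => by rw [← mul_assoc, huw, mul_assoc]
  have hvw' : ∀ c, w*(v*c) = v*(w*c) := fun c => by rw [← mul_assoc, hvw, mul_assoc]
  have ha' : ∀ c, a*(a*c) = 0 := fun c => by rw [← mul_assoc, ha, zero_mul]
  have hb' : ∀ c, b*(b*c) = 0 := fun c => by rw [← mul_assoc, hb, zero_mul]
  have hbab : ∀ c, b*(a*(b*c)) = a*(b*(a*c)) := fun c => by
    rw [← mul_assoc, ← mul_assoc, ← hab, mul_assoc, mul_assoc]
  have hab2 : b*(a*b) = a*(b*a) := by rw [← mul_assoc, ← mul_assoc, hab]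
  simp only [mul_sub, sub_mul, mul_add, add_mul, mul_one, one_mul, mul_assoc]
  simp only [hau', hav', haw', hbu', hbv', hbw', huv', huw', hvw', ha', hb', hbab,
    hau, hav, haw, hbu, hbv, hbw, huv, huw, hvw, ha, hb, hab2,
    mul_sub, sub_mul, mul_add, add_mul, mul_one, one_mul, mul_zero, zero_mul, sub_zero, zero_sub,
    zero_add, add_zero]
  noncomm_ring

theorem comm_aux (p q : R) (h1 : a*b = b*a) (h2 : a*p = p*a) (h3 : a*q = q*a)
    (h4 : u*b = b*u) (h5 : u*p = p*u) (h6 : u*q = q*u)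
    (h7 : v*b = b*v) (h8 : v*p = p*v) (h9 : v*q = q*v) :
    (a*(u-v)-1) * (b*(p-q)-1) = (b*(p-q)-1) * (a*(u-v)-1) := by
  have h1' : ∀ c, a*(b*c) = b*(a*c) := fun c => by rw [← mul_assoc, h1, mul_assoc]
  have h2' : ∀ c, a*(p*c) = p*(a*c) := fun c => by rw [← mul_assoc, h2, mul_assoc]
  have h3' : ∀ c, a*(q*c) = q*(a*c) := fun c => by rw [← mul_assoc, h3, mul_assoc]
  have h4' : ∀ c, u*(b*c) = b*(u*c) := fun c => by rw [← mul_assoc, h4, mul_assoc]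
  have h5' : ∀ c, u*(p*c) = p*(u*c) := fun c => by rw [← mul_assoc, h5, mul_assoc]
  have h6' : ∀ c, u*(q*c) = q*(u*c) := fun c => by rw [← mul_assoc, h6, mul_assoc]
  have h7' : ∀ c, v*(b*c) = b*(v*c) := fun c => by rw [← mul_assoc, h7, mul_assoc]
  have h8' : ∀ c, v*(p*c) = p*(v*c) := fun c => by rw [← mul_assoc, h8, mul_assoc]
  have h9' : ∀ c, v*(q*c) = q*(v*c) := fun c => by rw [← mul_assoc, h9, mul_assoc]
  simp only [mul_sub, sub_mul, mul_add, add_mul, mul_one, one_mul, mul_assoc]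
  simp only [h1', h2', h3', h4', h5', h6', h7', h8', h9', h1, h2, h3, h4, h5, h6, h7, h8, h9]
  noncomm_ring

theorem sxu_aux (hau : a*u = v*a + 1) (hav : a*v = u*a - 1) (huv : v*u = u*v) :
    (a*(u-v)-1) * u = v * (a*(u-v)-1) := by
  have hau' : ∀ c, a*(u*c) = v*(a*c) + c := fun c => by rw [← mul_assoc, hau, add_mul, one_mul, mul_assoc]
  have hav' : ∀ c, a*(v*c) = u*(a*c) - c := fun c => by rw [← mul_assoc, hav, sub_mul, one_mul, mul_assoc]
  have huv' : ∀ c, v*(u*c) = u*(v*c) := fun c => by rw [← mul_assoc, huv, mul_assoc]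
  simp only [mul_sub, sub_mul, mul_add, add_mul, mul_one, one_mul, mul_assoc]
  simp only [hau', hav', huv', hau, hav, huv, mul_sub, sub_mul, mul_add, add_mul, mul_one, one_mul]
  noncomm_ring

theorem sxv_aux (hau : a*u = v*a + 1) (hav : a*v = u*a - 1) (huv : v*u = u*v) :
    (a*(u-v)-1) * v = u * (a*(u-v)-1) := by
  have hau' : ∀ c, a*(u*c) = v*(a*c) + c := fun c => by rw [← mul_assoc, hau, add_mul, one_mul, mul_assoc]
  have hav' : ∀ c, a*(v*c) = u*(a*c) - c := fun c => by rw [← mul_assoc, hav, sub_mul, one_mul, mul_assoc]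
  have huv' : ∀ c, v*(u*c) = u*(v*c) := fun c => by rw [← mul_assoc, huv, mul_assoc]
  simp only [mul_sub, sub_mul, mul_add, add_mul, mul_one, one_mul, mul_assoc]
  simp only [hau', hav', huv', hau, hav, huv, mul_sub, sub_mul, mul_add, add_mul, mul_one, one_mul]
  noncomm_ring

theorem sxo_aux (haz : a*z = z*a) (huz : u*z = z*u) (hvz : v*z = z*v) :
    (a*(u-v)-1) * z = z * (a*(u-v)-1) := by
  have haz' : ∀ c, a*(z*c) = z*(a*c) := fun c => by rw [← mul_assoc, haz, mul_assoc]
  have huz' : ∀ c, u*(z*c) = z*(u*c) := fun c => by rw [← mul_assoc, huz, mul_assoc]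
  have hvz' : ∀ c, v*(z*c) = z*(v*c) := fun c => by rw [← mul_assoc, hvz, mul_assoc]
  simp only [mul_sub, sub_mul, mul_add, add_mul, mul_one, one_mul, mul_assoc]
  simp only [haz', huz', hvz', haz, huz, hvz]

end RingAux

open Equiv

/-- `Dg g p` represents the transposition `(0 p)` as a product of the images of
adjacent transpositions. -/
def Dg {G : Type} [Monoid G] (g : ℕ → G) : ℕ → G
  | 0 => 1
  | 1 => g 0
  | (p+2) => g (p+1) * Dg g (p+1) * g (p+1)

theorem Dg_succ {G : Type} [Monoid G] (g : ℕ → G) (p : ℕ) (hp : 1 ≤ p) :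
    Dg g (p+1) = g p * Dg g p * g p := by
  match p, hp with
  | (q+1), _ => rfl

section PermFacts
variable {n : ℕ}

theorem symm_eq_mul (p : Fin (n+1)) (e : Perm (Fin n)) :
    Equiv.Perm.decomposeFin.symm (p, e) = swap 0 p * Equiv.Perm.decomposeFin.symm (0, e) := by
  ext x
  refine Fin.cases ?_ (fun y => ?_) x
  · simp [Perm.mul_apply]
  · simp [Perm.mul_apply, Equiv.Perm.decomposeFin_symm_apply_succ]

theorem symm_zero_mul (e e' : Perm (Fin n)) :
    Equiv.Perm.decomposeFin.symm ((0 : Fin (n+1)), e * e') =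
      Equiv.Perm.decomposeFin.symm ((0 : Fin (n+1)), e) *
        Equiv.Perm.decomposeFin.symm ((0 : Fin (n+1)), e') := by
  ext x
  refine Fin.cases ?_ (fun y => ?_) x <;>
    simp [Perm.mul_apply, Equiv.Perm.decomposeFin_symm_apply_succ]

theorem symm_zero_swap (a b : Fin n) :
    Equiv.Perm.decomposeFin.symm ((0 : Fin (n+1)), swap a b) = swap a.succ b.succ := by
  ext x
  refine Fin.cases ?_ (fun y => ?_) x
  · rw [Equiv.Perm.decomposeFin_symm_apply_zero,
      swap_apply_of_ne_of_ne (Fin.succ_ne_zero a).symm (Fin.succ_ne_zero b).symm]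
  · rw [Equiv.Perm.decomposeFin_symm_apply_succ, (Fin.succ_injective n).swap_apply]
    simp


theorem adj_mul_symm (j : ℕ) (hi : j+1+1 < n+1) (hj : j+1 < n)
    (p r : Fin (n+1)) (e : Perm (Fin n))
    (hr : r = swap (⟨j+1, Nat.lt_of_succ_lt hi⟩ : Fin (n+1)) ⟨j+2, hi⟩ p) :
    swap (⟨j+1, Nat.lt_of_succ_lt hi⟩ : Fin (n+1)) ⟨j+2, hi⟩ *
      Equiv.Perm.decomposeFin.symm (p, e)
    = Equiv.Perm.decomposeFin.symm
        (r, swap ⟨j, Nat.lt_of_succ_lt hj⟩ ⟨j+1, hj⟩ * e) := by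
  have ht : swap (⟨j+1, Nat.lt_of_succ_lt hi⟩ : Fin (n+1)) ⟨j+2, hi⟩
      = Equiv.Perm.decomposeFin.symm
          ((0 : Fin (n+1)), swap ⟨j, Nat.lt_of_succ_lt hj⟩ ⟨j+1, hj⟩) :=
    (symm_zero_swap ⟨j, Nat.lt_of_succ_lt hj⟩ ⟨j+1, hj⟩).symm
  have hmsw := Equiv.mul_swap_eq_swap_mul
    (swap (⟨j+1, Nat.lt_of_succ_lt hi⟩ : Fin (n+1)) ⟨j+2, hi⟩) 0 p
  have h0 : swap (⟨j+1, Nat.lt_of_succ_lt hi⟩ : Fin (n+1)) ⟨j+2, hi⟩ 0 = 0 :=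
    swap_apply_of_ne_of_ne (Fin.ne_of_val_ne (by simp)) (Fin.ne_of_val_ne (by simp))
  rw [h0, ← hr] at hmsw
  calc swap (⟨j+1, Nat.lt_of_succ_lt hi⟩ : Fin (n+1)) ⟨j+2, hi⟩ *
        Equiv.Perm.decomposeFin.symm (p, e)
      = (swap (⟨j+1, Nat.lt_of_succ_lt hi⟩ : Fin (n+1)) ⟨j+2, hi⟩ * swap 0 p) *
          Equiv.Perm.decomposeFin.symm (0, e) := by rw [symm_eq_mul p e, mul_assoc]
    _ = (swap 0 r * swap (⟨j+1, Nat.lt_of_succ_lt hi⟩ : Fin (n+1)) ⟨j+2, hi⟩) *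
          Equiv.Perm.decomposeFin.symm (0, e) := by rw [hmsw]
    _ = swap 0 r *
          (Equiv.Perm.decomposeFin.symm (0, swap ⟨j, Nat.lt_of_succ_lt hj⟩ ⟨j+1, hj⟩) *
            Equiv.Perm.decomposeFin.symm (0, e)) := by rw [ht, mul_assoc]
    _ = swap 0 r * Equiv.Perm.decomposeFin.symm
            (0, swap ⟨j, Nat.lt_of_succ_lt hj⟩ ⟨j+1, hj⟩ * e) := by
        rw [symm_zero_mul]
    _ = Equiv.Perm.decomposeFin.symm
          (r, swap ⟨j, Nat.lt_of_succ_lt hj⟩ ⟨j+1, hj⟩ * e) := by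
        exact (symm_eq_mul _ _).symm

theorem swap01_mul_symm (hn : 0 < n) (hi : 0+1 < n+1) (q : Fin n) (hq1 : 1 ≤ (q : ℕ))
    (e : Perm (Fin n)) :
    swap (0 : Fin (n+1)) ⟨1, hi⟩ * Equiv.Perm.decomposeFin.symm (q.succ, e)
    = Equiv.Perm.decomposeFin.symm (q.succ, swap ⟨0, hn⟩ q * e) := by
  have h01 : (⟨0, hn⟩ : Fin n).succ = (⟨1, hi⟩ : Fin (n+1)) := rfl
  have hf0 : swap (0 : Fin (n+1)) q.succ 0 = q.succ := swap_apply_left _ _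
  have hf1 : swap (0 : Fin (n+1)) q.succ ⟨1, hi⟩ = ⟨1, hi⟩ :=
    swap_apply_of_ne_of_ne (Fin.ne_of_val_ne (by simp))
      (Fin.ne_of_val_ne (by simp [Fin.val_succ]; omega))
  have key := Equiv.swap_apply_apply (swap (0 : Fin (n+1)) q.succ) 0 ⟨1, hi⟩
  rw [hf0, hf1, Equiv.swap_inv] at key
  have hc : swap (0 : Fin (n+1)) ⟨1, hi⟩ * swap 0 q.succ
      = swap (0 : Fin (n+1)) q.succ * swap (⟨1, hi⟩ : Fin (n+1)) q.succ := by
    rw [swap_comm (⟨1, hi⟩ : Fin (n+1)) q.succ, key]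
    simp only [← mul_assoc]
    rw [Equiv.swap_mul_self, one_mul]
  calc swap (0 : Fin (n+1)) ⟨1, hi⟩ * Equiv.Perm.decomposeFin.symm (q.succ, e)
      = (swap (0 : Fin (n+1)) ⟨1, hi⟩ * swap 0 q.succ) *
          Equiv.Perm.decomposeFin.symm (0, e) := by rw [symm_eq_mul q.succ e, mul_assoc]
    _ = swap (0 : Fin (n+1)) q.succ *
          (swap (⟨1, hi⟩ : Fin (n+1)) q.succ * Equiv.Perm.decomposeFin.symm (0, e)) := by
        rw [hc, mul_assoc]
    _ = swap (0 : Fin (n+1)) q.succ *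
          (Equiv.Perm.decomposeFin.symm (0, swap ⟨0, hn⟩ q) *
            Equiv.Perm.decomposeFin.symm (0, e)) := by
        rw [symm_zero_swap, h01]
    _ = swap (0 : Fin (n+1)) q.succ *
          Equiv.Perm.decomposeFin.symm (0, swap ⟨0, hn⟩ q * e) := by rw [symm_zero_mul]
    _ = Equiv.Perm.decomposeFin.symm (q.succ, swap ⟨0, hn⟩ q * e) :=
        (symm_eq_mul _ _).symm

end PermFacts

set_option maxHeartbeats 2000000 in
theorem perm_lift {G : Type} [Group G] :
    ∀ (m : ℕ) (g : ℕ → G),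
    (∀ i, i+1 < m → g i * g i = 1) →
    (∀ i, i+2 < m → g i * g (i+1) * g i = g (i+1) * g i * g (i+1)) →
    (∀ i j, i+1 < j → j+1 < m → g i * g j = g j * g i) →
    ∃ φ : Perm (Fin m) →* G, ∀ (i : ℕ) (h : i+1 < m),
      φ (swap ⟨i, Nat.lt_of_succ_lt h⟩ ⟨i+1, h⟩) = g i := by
  intro m
  induction m with
  | zero => exact fun g _ _ _ => ⟨1, fun i h => by omega⟩
  | succ n IH =>
    intro g hsq hbr hcm
    obtain ⟨φ', hφ'⟩ := IH (fun i => g (i+1))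
      (fun i h => hsq (i+1) (by omega))
      (fun i h => hbr (i+1) (by omega))
      (fun i j h1 h2 => hcm (i+1) (j+1) (by omega) (by omega))
    set g' : ℕ → G := fun i => g (i+1) with hg'
    -- the commuting lemma
    have CL : ∀ p i, 1 ≤ i → p ≠ i → p ≠ i+1 → i+1 < n+1 → p < n+1 →
        Commute (g i) (Dg g p) := by
      intro p
      induction p using Nat.strong_induction_on with
      | _ p IH2 =>
        intro i hi1 hpi hpi1 hin hpn
        match p, IH2, hpi, hpi1, hpn with
        | 0, _, _, _, _ => exact Commute.one_right _
        | 1, _, hpi, _, _ =>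
          show Commute (g i) (g 0)
          exact (hcm 0 i (by omega) hin).symm
        | (p+2), IH2, hpi, hpi1, hpn =>
          show Commute (g i) (g (p+1) * Dg g (p+1) * g (p+1))
          rcases Nat.lt_trichotomy i p with hlt | heq | hgt
          · have h1 : Commute (g i) (g (p+1)) := hcm i (p+1) (by omega) (by omega)
            have h2 : Commute (g i) (Dg g (p+1)) :=
              IH2 (p+1) (by omega) i hi1 (by omega) (by omega) hin (by omega)
            exact (h1.mul_right h2).mul_right h1
          · -- i = p ≥ 1 : braid case
            have hDg : Dg g (p+1) = g p * Dg g p * g p := Dg_succ g p (heq ▸ hi1)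
            have br := hbr p (by omega)
            have cmD : g (p+1) * Dg g p = Dg g p * g (p+1) :=
              IH2 p (by omega) (p+1) (by omega) (by omega) (by omega) (by omega) (by omega)
            rw [heq]
            show g p * (g (p+1) * Dg g (p+1) * g (p+1)) = g (p+1) * Dg g (p+1) * g (p+1) * g p
            rw [hDg]
            calc g p * (g (p+1) * (g p * Dg g p * g p) * g (p+1))
                = (g p * g (p+1) * g p) * Dg g p * (g p * g (p+1)) := by
                  simp only [mul_assoc]
              _ = (g (p+1) * g p * g (p+1)) * Dg g p * (g p * g (p+1)) := by rw [br]
              _ = (g (p+1) * g p) * (g (p+1) * Dg g p) * (g p * g (p+1)) := by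
                  simp only [mul_assoc]
              _ = (g (p+1) * g p) * (Dg g p * g (p+1)) * (g p * g (p+1)) := by rw [cmD]
              _ = (g (p+1) * (g p * Dg g p)) * (g (p+1) * g p * g (p+1)) := by
                  simp only [mul_assoc]
              _ = (g (p+1) * (g p * Dg g p)) * (g p * g (p+1) * g p) := by rw [br]
              _ = g (p+1) * (g p * Dg g p * g p) * g (p+1) * g p := by simp only [mul_assoc]
          · have h1 : Commute (g i) (g (p+1)) := (hcm (p+1) i (by omega) (by omega)).symm
            have h2 : Commute (g i) (Dg g (p+1)) :=
              IH2 (p+1) (by omega) i hi1 (by omega) (by omega) hin (by omega)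
            exact (h1.mul_right h2).mul_right h1
    -- the exchange lemma
    have EL : ∀ q, 1 ≤ q → q+1 < n+1 → Dg g (q+1) * Dg g' q = g 0 * Dg g (q+1) := by
      intro q
      induction q with
      | zero => omega
      | succ q IHq =>
        intro _ hq1
        rcases Nat.eq_zero_or_pos q with rfl | hq
        · show Dg g 2 * Dg g' 1 = g 0 * Dg g 2
          have e2 : Dg g 2 = g 1 * g 0 * g 1 := rfl
          have e1 : Dg g' 1 = g 1 := rfl
          have h11 : g 1 * g 1 = 1 := hsq 1 (by omega)
          have hb := hbr 0 (by omega)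
          rw [e1, e2, mul_assoc (g 1 * g 0), h11, mul_one]
          calc g 1 * g 0 = g 1 * g 0 * (g 1 * g 1) := by rw [h11, mul_one]
            _ = (g 1 * g 0 * g 1) * g 1 := by simp only [mul_assoc]
            _ = (g 0 * g 1 * g 0) * g 1 := by rw [hb]
            _ = g 0 * (g 1 * g 0 * g 1) := by simp only [mul_assoc]
        · have IH' := IHq hq (by omega)
          have hD1 : Dg g (q+2) = g (q+1) * Dg g (q+1) * g (q+1) := Dg_succ g (q+1) (by omega)
          have hD2 : Dg g' (q+1) = g' q * Dg g' q * g' q := Dg_succ g' q hq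
          have hgq : g' q = g (q+1) := rfl
          rw [hD1, hD2, hgq]
          calc g (q+1) * Dg g (q+1) * g (q+1) * (g (q+1) * Dg g' q * g (q+1))
              = g (q+1) * Dg g (q+1) * (g (q+1) * g (q+1)) * (Dg g' q * g (q+1)) := by
                simp only [mul_assoc]
            _ = g (q+1) * (Dg g (q+1) * Dg g' q) * g (q+1) := by
                rw [hsq (q+1) (by omega)]; simp only [mul_assoc, one_mul, mul_one]
            _ = g (q+1) * (g 0 * Dg g (q+1)) * g (q+1) := by rw [IH']
            _ = (g (q+1) * g 0) * (Dg g (q+1) * g (q+1)) := by simp only [mul_assoc]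
            _ = (g 0 * g (q+1)) * (Dg g (q+1) * g (q+1)) := by
                rw [hcm 0 (q+1) (by omega) (by omega)]
            _ = g 0 * (g (q+1) * Dg g (q+1) * g (q+1)) := by simp only [mul_assoc]
    -- φ' on transpositions (0 q)
    have SW : ∀ (q : ℕ) (hq : q < n) (h0 : 0 < n),
        φ' (swap ⟨0, h0⟩ ⟨q, hq⟩) = Dg (fun i => g (i+1)) q := by
      intro q
      induction q using Nat.strong_induction_on with
      | _ q IHq =>
        intro hq h0
        match q, IHq, hq with
        | 0, _, _ => rw [swap_self]; show φ' 1 = 1; exact map_one φ'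
        | 1, _, hq => exact hφ' 0 hq
        | (q+2), IHq, hq =>
          have hq1 : q + 1 < n := by omega
          set t : Perm (Fin n) := swap ⟨q+1, hq1⟩ ⟨q+2, hq⟩ with htdef
          have h1 : t ⟨0, h0⟩ = ⟨0, h0⟩ :=
            swap_apply_of_ne_of_ne (Fin.ne_of_val_ne (by simp)) (Fin.ne_of_val_ne (by simp))
          have h2 : t ⟨q+1, hq1⟩ = ⟨q+2, hq⟩ := swap_apply_left _ _
          have key := Equiv.swap_apply_apply t ⟨0, h0⟩ ⟨q+1, hq1⟩
          rw [h1, h2, Equiv.swap_inv] at key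
          rw [key, map_mul, map_mul, IHq (q+1) (by omega) hq1 h0, hφ' (q+1) hq]
          rfl
    -- the function
    set f : Perm (Fin (n+1)) → G :=
      fun σ => Dg g ((Equiv.Perm.decomposeFin σ).1 : ℕ) * φ' (Equiv.Perm.decomposeFin σ).2
      with hfdef
    have hfs : ∀ (p : Fin (n+1)) (e : Perm (Fin n)),
        f (Equiv.Perm.decomposeFin.symm (p, e)) = Dg g (p : ℕ) * φ' e := by
      intro p e
      simp only [hfdef, Equiv.apply_symm_apply]
    -- the key lemma
    have KL : ∀ (i : ℕ) (hi : i+1 < n+1) (σ : Perm (Fin (n+1))),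
        f (swap ⟨i, Nat.lt_of_succ_lt hi⟩ ⟨i+1, hi⟩ * σ) = g i * f σ := by
      intro i hi σ
      obtain ⟨p, e, rfl⟩ : ∃ (p : Fin (n+1)) (e : Perm (Fin n)),
          σ = Equiv.Perm.decomposeFin.symm (p, e) :=
        ⟨(Equiv.Perm.decomposeFin σ).1, (Equiv.Perm.decomposeFin σ).2, by simp⟩
      rw [hfs]
      cases i with
      | zero =>
        have hn : 0 < n := by omega
        have e0 : (⟨0, Nat.lt_of_succ_lt hi⟩ : Fin (n+1)) = 0 := Fin.ext (by simp)
        rw [e0]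
        rcases Fin.eq_zero_or_eq_succ p with rfl | ⟨q, rfl⟩
        · rw [← symm_eq_mul ⟨1, hi⟩ e, hfs]
          show Dg g 1 * φ' e = g 0 * (Dg g 0 * φ' e)
          show g 0 * φ' e = g 0 * (1 * φ' e)
          rw [one_mul]
        · by_cases hq0 : (q : ℕ) = 0
          · have hq : q = ⟨0, hn⟩ := Fin.ext hq0
            rw [hq]
            have hsucc : (⟨0, hn⟩ : Fin n).succ = (⟨1, hi⟩ : Fin (n+1)) := rfl
            rw [hsucc, symm_eq_mul ⟨1, hi⟩ e, ← mul_assoc, Equiv.swap_mul_self, one_mul, hfs]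
            show 1 * φ' e = g 0 * (Dg g 1 * φ' e)
            show 1 * φ' e = g 0 * (g 0 * φ' e)
            rw [one_mul, ← mul_assoc, hsq 0 (by omega), one_mul]
          · have hq1 : 1 ≤ (q : ℕ) := by omega
            have hstep := swap01_mul_symm hn hi q hq1 e
            rw [hstep, hfs, map_mul]
            have hSW := SW (q : ℕ) q.isLt hn
            rw [Fin.eta] at hSW
            rw [hSW]
            have hv : ((q.succ : Fin (n+1)) : ℕ) = (q : ℕ) + 1 := rfl
            rw [hv, ← mul_assoc, EL (q : ℕ) hq1 (by omega), mul_assoc]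
      | succ j =>
        have hj : j + 1 < n := by omega
        have hstep := adj_mul_symm j hi hj p _ e rfl
        rw [hstep, hfs, MonoidHom.map_mul φ', hφ' j hj]
        suffices hS : Dg g ((swap (⟨j+1, Nat.lt_of_succ_lt hi⟩ : Fin (n+1)) ⟨j+2, hi⟩ p : Fin (n+1)) : ℕ) * g (j+1)
            = g (j+1) * Dg g (p : ℕ) by
          rw [← mul_assoc, hS, mul_assoc]
        by_cases h1 : p = (⟨j+1, Nat.lt_of_succ_lt hi⟩ : Fin (n+1))
        · rw [h1, swap_apply_left]
          show Dg g (j+2) * g (j+1) = g (j+1) * Dg g (j+1)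
          rw [Dg_succ g (j+1) (by omega), mul_assoc (g (j+1) * Dg g (j+1)), hsq (j+1) hi,
            mul_one]
        · by_cases h2 : p = (⟨j+2, hi⟩ : Fin (n+1))
          · rw [h2, swap_apply_right]
            show Dg g (j+1) * g (j+1) = g (j+1) * Dg g (j+2)
            rw [Dg_succ g (j+1) (by omega)]
            calc Dg g (j+1) * g (j+1)
                = (g (j+1) * g (j+1)) * (Dg g (j+1) * g (j+1)) := by
                  rw [hsq (j+1) hi, one_mul]
              _ = g (j+1) * (g (j+1) * Dg g (j+1) * g (j+1)) := by simp only [mul_assoc]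
          · rw [swap_apply_of_ne_of_ne h1 h2]
            exact (CL (p : ℕ) (j+1) (by omega)
              (fun hval => h1 (Fin.ext hval)) (fun hval => h2 (Fin.ext hval))
              hi p.isLt).eq.symm
    -- conclude
    have f1 : f 1 = 1 := by
      have h1 : (1 : Perm (Fin (n+1))) = Equiv.Perm.decomposeFin.symm (0, 1) := by
        rw [Equiv.Perm.decomposeFin_symm_of_one, swap_self]
        rfl
      rw [h1, hfs, map_one, mul_one]
      rfl
    have hval : ∀ (i : ℕ) (h : i+1 < n+1),
        f (swap ⟨i, Nat.lt_of_succ_lt h⟩ ⟨i+1, h⟩) = g i := by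
      intro i h
      have := KL i h 1
      rwa [mul_one, f1, mul_one] at this
    have fmul : ∀ σ τ, f (σ * τ) = f σ * f τ := by
      intro σ
      have hσ : σ ∈ Submonoid.closure
          (Set.range fun i : Fin n => swap (Fin.castSucc i) (Fin.succ i)) := by
        rw [Equiv.Perm.mclosure_swap_castSucc_succ n]
        exact Submonoid.mem_top σ
      induction hσ using Submonoid.closure_induction with
      | mem x hx =>
        obtain ⟨i, rfl⟩ := hx
        intro τ
        have hcast : Fin.castSucc i = (⟨(i : ℕ), by omega⟩ : Fin (n+1)) := Fin.ext rfl
        have hsucc : Fin.succ i = (⟨(i : ℕ)+1, by omega⟩ : Fin (n+1)) := Fin.ext rfl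
        show f (swap (Fin.castSucc i) (Fin.succ i) * τ)
            = f (swap (Fin.castSucc i) (Fin.succ i)) * f τ
        rw [hcast, hsucc, KL (i : ℕ) (by omega) τ, hval (i : ℕ) (by omega)]
      | one =>
        intro τ
        rw [one_mul, f1, one_mul]
      | mul x y hx hy ihx ihy =>
        intro τ
        simp only [mul_assoc, ihx, ihy]
    exact ⟨MonoidHom.mk' f fmul, hval⟩


section SRel
variable (k : Type) [Field k]

theorem TX' (n i : ℕ) (h : i + 1 < n) :
    T k n i * X k n i = X k n (i+1) * T k n i + 1 := by
  have h1 := TX k n i h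
  rw [← h1]; abel

theorem XT' (n i : ℕ) (h : i + 1 < n) :
    T k n i * X k n (i+1) = X k n i * T k n i - 1 := by
  refine eq_sub_of_add_eq ?_
  have h1 := XT k n i h
  rw [← h1]; abel

theorem s_sq (n i : ℕ) (h : i + 1 < n) : s k n i * s k n i = 1 := by
  show (T k n i * (X k n i - X k n (i+1)) - 1) * (T k n i * (X k n i - X k n (i+1)) - 1) = 1
  exact sq_aux _ _ _ (TX' k n i h) (XT' k n i h) (T_sq k n i) (X_comm k n (i+1) i)

theorem s_braid (n i : ℕ) (h : i + 2 < n) :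
    s k n i * s k n (i+1) * s k n i = s k n (i+1) * s k n i * s k n (i+1) := by
  show (T k n i * (X k n i - X k n (i+1)) - 1) * (T k n (i+1) * (X k n (i+1) - X k n (i+2)) - 1) *
      (T k n i * (X k n i - X k n (i+1)) - 1)
    = (T k n (i+1) * (X k n (i+1) - X k n (i+2)) - 1) * (T k n i * (X k n i - X k n (i+1)) - 1) *
      (T k n (i+1) * (X k n (i+1) - X k n (i+2)) - 1)
  exact braid_aux _ _ _ _ _ (T_braid k n i) (T_sq k n i) (T_sq k n (i+1))
    (TX' k n i (by omega)) (XT' k n i (by omega))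
    (TX_comm k n i (i+2) (by omega) (by omega))
    (TX_comm k n (i+1) i (by omega) (by omega))
    (TX' k n (i+1) (by omega)) (XT' k n (i+1) (by omega))
    (X_comm k n (i+1) i) (X_comm k n (i+2) i) (X_comm k n (i+2) (i+1))

theorem s_comm (n i j : ℕ) (h1 : i + 1 < j) (h2 : j + 1 < n) :
    s k n i * s k n j = s k n j * s k n i := by
  show (T k n i * (X k n i - X k n (i+1)) - 1) * (T k n j * (X k n j - X k n (j+1)) - 1)
    = (T k n j * (X k n j - X k n (j+1)) - 1) * (T k n i * (X k n i - X k n (i+1)) - 1)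
  exact comm_aux _ _ _ _ _ _ (T_comm k n i j h1)
    (TX_comm k n i j (by omega) (by omega)) (TX_comm k n i (j+1) (by omega) (by omega))
    ((TX_comm k n j i (by omega) (by omega)).symm) (X_comm k n i j) (X_comm k n i (j+1))
    ((TX_comm k n j (i+1) (by omega) (by omega)).symm) (X_comm k n (i+1) j)
    (X_comm k n (i+1) (j+1))

theorem s_mul_X_self (n i : ℕ) (h : i + 1 < n) :
    s k n i * X k n i = X k n (i+1) * s k n i := by
  show (T k n i * (X k n i - X k n (i+1)) - 1) * X k n i
    = X k n (i+1) * (T k n i * (X k n i - X k n (i+1)) - 1)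
  exact sxu_aux _ _ _ (TX' k n i h) (XT' k n i h) (X_comm k n (i+1) i)

theorem s_mul_X_succ (n i : ℕ) (h : i + 1 < n) :
    s k n i * X k n (i+1) = X k n i * s k n i := by
  show (T k n i * (X k n i - X k n (i+1)) - 1) * X k n (i+1)
    = X k n i * (T k n i * (X k n i - X k n (i+1)) - 1)
  exact sxv_aux _ _ _ (TX' k n i h) (XT' k n i h) (X_comm k n (i+1) i)

theorem s_mul_X_other (n i j : ℕ) (h1 : j ≠ i) (h2 : j ≠ i + 1) :
    s k n i * X k n j = X k n j * s k n i := by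
  show (T k n i * (X k n i - X k n (i+1)) - 1) * X k n j
    = X k n j * (T k n i * (X k n i - X k n (i+1)) - 1)
  exact sxo_aux _ _ _ _ (TX_comm k n i j h1 h2) (X_comm k n i j) (X_comm k n (i+1) j)

end SRel

end NilHecke

namespace NilHecke

/-- The assignment `x_i ↦ x_i`, `(i,i+1) ↦ s_i = τ_i(x_i − x_{i+1}) − 1`
defines an algebra morphism `k[x_1,…,x_n] ⋊ S_n → H_n`.  By the universal property of the
smash product, such a morphism is exactly the data of a multiplicative representation
`ρ : S_n → H_n` with `ρ` sending each adjacent transposition `(i,i+1)` to `s_i`, together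
with the commutation rule `ρ(σ) x_j = x_{σ(j)} ρ(σ)` (the polynomial part `x_i ↦ x_i`
being determined); the morphism then sends `p ⋊ σ ↦ p(x) ρ(σ)`. -/
theorem exists_smash_morphism (k : Type) [Field k] (n : ℕ) :
    ∃ ρ : Equiv.Perm (Fin n) →* H k n,
      (∀ (i : Fin n) (h : (i : ℕ) + 1 < n),
        ρ (Equiv.swap i ⟨(i : ℕ) + 1, h⟩) = s k n i) ∧
      (∀ (σ : Equiv.Perm (Fin n)) (j : Fin n),
        ρ σ * X k n j = X k n (σ j) * ρ σ) := by
  classical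
  set gU : ℕ → (H k n)ˣ := fun i =>
    if h : i + 1 < n then ⟨s k n i, s k n i, s_sq k n i h, s_sq k n i h⟩ else 1 with hgU
  have hgUval : ∀ (i : ℕ), i + 1 < n → ((gU i : (H k n)ˣ) : H k n) = s k n i := by
    intro i h
    rw [hgU]
    simp only [dif_pos h]
  obtain ⟨φ, hφ⟩ := perm_lift n gU
    (fun i h => Units.ext (by
      simp only [Units.val_mul, Units.val_one, hgUval i h]
      exact s_sq k n i h))
    (fun i h => Units.ext (by
      simp only [Units.val_mul, hgUval i (by omega), hgUval (i+1) (by omega)]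
      exact s_braid k n i h))
    (fun i j h1 h2 => Units.ext (by
      simp only [Units.val_mul, hgUval i (by omega), hgUval j (by omega)]
      exact s_comm k n i j h1 h2))
  set ρ : Equiv.Perm (Fin n) →* H k n := (Units.coeHom (H k n)).comp φ with hρ
  have prop1 : ∀ (i : Fin n) (h : (i : ℕ) + 1 < n),
      ρ (Equiv.swap i ⟨(i : ℕ) + 1, h⟩) = s k n i := by
    intro i h
    have h2 : Equiv.swap i (⟨(i : ℕ) + 1, h⟩ : Fin n)
        = Equiv.swap ⟨(i : ℕ), Nat.lt_of_succ_lt h⟩ ⟨(i : ℕ) + 1, h⟩ := by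
      rw [Fin.eta]
    rw [hρ, MonoidHom.comp_apply, h2, hφ (i : ℕ) h, Units.coeHom_apply, hgUval (i : ℕ) h]
  refine ⟨ρ, prop1, ?_⟩
  cases n with
  | zero => exact fun σ j => j.elim0
  | succ m =>
    intro σ
    have hσ : σ ∈ Submonoid.closure
        (Set.range fun i : Fin m => Equiv.swap (Fin.castSucc i) (Fin.succ i)) := by
      rw [Equiv.Perm.mclosure_swap_castSucc_succ m]
      exact Submonoid.mem_top σ
    induction hσ using Submonoid.closure_induction with
    | mem x hx =>
      obtain ⟨i, rfl⟩ := hx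
      intro j
      show ρ (Equiv.swap (Fin.castSucc i) (Fin.succ i)) * X k (m+1) (j : ℕ)
        = X k (m+1) ((Equiv.swap (Fin.castSucc i) (Fin.succ i) j : Fin (m+1)) : ℕ) *
          ρ (Equiv.swap (Fin.castSucc i) (Fin.succ i))
      have hb : ((Fin.castSucc i : Fin (m+1)) : ℕ) + 1 < m + 1 := by
        simp only [Fin.coe_castSucc]
        omega
      have hsucc : (Fin.succ i : Fin (m+1))
          = ⟨((Fin.castSucc i : Fin (m+1)) : ℕ) + 1, hb⟩ := by
        apply Fin.ext
        simp
      have hρval : ρ (Equiv.swap (Fin.castSucc i) (Fin.succ i)) = s k (m+1) (i : ℕ) := by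
        rw [hsucc]
        have := prop1 (Fin.castSucc i) hb
        simpa using this
      rw [hρval]
      by_cases hj1 : j = Fin.castSucc i
      · rw [hj1, Equiv.swap_apply_left]
        have e1 : ((Fin.castSucc i : Fin (m+1)) : ℕ) = (i : ℕ) := rfl
        have e2 : ((Fin.succ i : Fin (m+1)) : ℕ) = (i : ℕ) + 1 := rfl
        rw [e1, e2]
        exact s_mul_X_self k (m+1) (i : ℕ) (by omega)
      · by_cases hj2 : j = Fin.succ i
        · rw [hj2, Equiv.swap_apply_right]
          have e1 : ((Fin.castSucc i : Fin (m+1)) : ℕ) = (i : ℕ) := rfl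
          have e2 : ((Fin.succ i : Fin (m+1)) : ℕ) = (i : ℕ) + 1 := rfl
          rw [e1, e2]
          exact s_mul_X_succ k (m+1) (i : ℕ) (by omega)
        · rw [Equiv.swap_apply_of_ne_of_ne hj1 hj2]
          refine s_mul_X_other k (m+1) (i : ℕ) (j : ℕ) ?_ ?_
          · exact fun hv => hj1 (Fin.ext (by simpa using hv))
          · exact fun hv => hj2 (Fin.ext (by simpa using hv))
    | one =>
      intro j
      simp
    | mul x y hx hy ihx ihy =>
      intro j
      rw [map_mul, Equiv.Perm.mul_apply, mul_assoc, ihy j, ← mul_assoc, ihx (y j), mul_assoc]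


end NilHecke
end

section
/- Let Δ̃_n = Σ_{r=1}^{n} (τ_r τ_{r+1} ⋯ τ_{n−1}) ⊗ (τ_1 τ_2 ⋯ τ_{r−1}) ∈ H_n[y] ⊗_{H_{n−1}[y]} ι_1 H_n, and let Δ_n be its image in H_n ι_0 ⊗_{H_{n−1}[y]} ι_1 H_n, where ι_0 : H_{n−1}[y] → H_n sends x_i ↦ x_i, τ_i ↦ τ_i, y ↦ x_n, and ι_1 : H_{n−1}[y] → H_n sends x_i ↦ x_{i+1}, τ_i ↦ τ_{i+1}, y ↦ x_1. Then a·Δ_n = Δ_n·a for all a ∈ H_n, where the left and right H_n-module structures on H_n ι_0 ⊗_{H_{n−1}[y]} ι_1 H_n come from left multiplication on the first factor and right multiplication on the second factor respectively. -/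
open scoped TensorProduct

namespace NilHecke

variable (k : Type) [Field k]

/-- `ι_0 : H_{n−1}[y] → H_n`, sending `x_i ↦ x_i`, `τ_i ↦ τ_i`, `y ↦ x_n`
(0-based: `y ↦ x_{n-1}`, the last variable). -/
def iota0 (n : ℕ) (p : Polynomial (H k (n-1))) : H k n :=
  p.sum fun i a => incl k (n-1) n (Nat.sub_le n 1) a * X k n (n-1) ^ i

/-- `ι_1 : H_{n−1}[y] → H_n`, sending `x_i ↦ x_{i+1}`, `τ_i ↦ τ_{i+1}`, `y ↦ x_1`
(0-based: `y ↦ x_0`, the first variable). -/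
def iota1 (n : ℕ) (p : Polynomial (H k (n-1))) : H k n :=
  p.sum fun i a => shj k (n-1) n (by omega) a * X k n 0 ^ i

/-- The balancing submodule of `H_n ⊗_k H_n` whose quotient is the balanced tensor
product `H_n ι_0 ⊗_{H_{n−1}[y]} ι_1 H_n`. -/
noncomputable def bal (n : ℕ) : Submodule k (H k n ⊗[k] H k n) :=
  Submodule.span k {z | ∃ (a b : H k n) (p : Polynomial (H k (n-1))),
    z = (a * iota0 k n p) ⊗ₜ[k] b - a ⊗ₜ[k] (iota1 k n p * b)}

/-- A representative in `H_n ⊗_k H_n` of the element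
`Δ_n = Σ_{r=1}^{n} (τ_r ⋯ τ_{n−1}) ⊗ (τ_1 ⋯ τ_{r−1})` (1-based indices). -/
noncomputable def deltaT (n : ℕ) : H k n ⊗[k] H k n :=
  ∑ r ∈ Finset.range n, chain k n r (n-1) ⊗ₜ[k] chain k n 0 r

/-- A representative of `p · Δ_n` for `p ∈ H_n[y]` acting through the left
`H_n[y]`-module structure of `H_n ι_0 ⊗_{H_{n−1}[y]} ι_1 H_n` (on the left factor,
`y` acting via `x_n`, i.e. a coefficient `c·y^i` sends `m ⊗ h` to `c·m·x_n^i ⊗ h`). -/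
noncomputable def actDelta (n : ℕ) (p : Polynomial (H k n)) : H k n ⊗[k] H k n :=
  ∑ r ∈ Finset.range n,
    (p.sum fun i c => c * chain k n r (n-1) * X k n (n-1) ^ i) ⊗ₜ[k] chain k n 0 r

end NilHecke

namespace NilHecke

section Aux

variable (k : Type) [Field k]

theorem chain_nil (n a b : ℕ) (h : b ≤ a) : chain k n a b = 1 := by
  simp [chain, Nat.sub_eq_zero_of_le h]

theorem chain_concat (n a m b : ℕ) (h1 : a ≤ m) (h2 : m ≤ b) :
    chain k n a b = chain k n a m * chain k n m b := by
  unfold chain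
  rw [← List.prod_append, ← List.map_append]
  have h : List.range' a (m - a) 1 ++ List.range' (a + 1 * (m - a)) (b - m) 1
      = List.range' a ((b - m) + (m - a)) 1 := by rw [List.range'_append, Nat.add_comm]
  rw [show a + 1 * (m - a) = m by omega, show (b - m) + (m - a) = b - a by omega] at h
  rw [h]

theorem chain_cons (n a b : ℕ) (h : a < b) : chain k n a b = T k n a * chain k n (a+1) b := by
  rw [chain_concat k n a (a+1) b (by omega) h]
  congr 1
  simp [chain, show a+1-a = 1 by omega]

theorem chain_snoc (n a b : ℕ) (h : a < b) : chain k n a b = chain k n a (b-1) * T k n (b-1) := by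
  rw [chain_concat k n a (b-1) b (by omega) (by omega)]
  congr 1
  simp [chain, show b-(b-1) = 1 by omega]

theorem T_comm_prod (n j : ℕ) (l : List ℕ) (h : ∀ i ∈ l, i + 1 < j ∨ j + 1 < i) :
    T k n j * (l.map (T k n)).prod = (l.map (T k n)).prod * T k n j := by
  induction l with
  | nil => simp
  | cons i t ih =>
    simp only [List.map_cons, List.prod_cons]
    have hij : T k n j * T k n i = T k n i * T k n j := by
      rcases h i (by simp) with h' | h'
      · exact (T_comm k n i j h').symm
      · exact T_comm k n j i h'
    rw [← mul_assoc, hij, mul_assoc, ih (fun i hi => h i (by simp [hi])), ← mul_assoc]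

theorem X_comm_prod (n j : ℕ) (l : List ℕ) (h : ∀ i ∈ l, j ≠ i ∧ j ≠ i + 1) :
    X k n j * (l.map (T k n)).prod = (l.map (T k n)).prod * X k n j := by
  induction l with
  | nil => simp
  | cons i t ih =>
    simp only [List.map_cons, List.prod_cons]
    have hij : X k n j * T k n i = T k n i * X k n j :=
      (TX_comm k n i j (h i (by simp)).1 (h i (by simp)).2).symm
    rw [← mul_assoc, hij, mul_assoc, ih (fun i hi => h i (by simp [hi])), ← mul_assoc]

theorem T_comm_chain (n j a b : ℕ) (h : ∀ i, a ≤ i → i < b → i + 1 < j ∨ j + 1 < i) :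
    T k n j * chain k n a b = chain k n a b * T k n j := by
  apply T_comm_prod
  intro i hi
  rw [List.mem_range'] at hi
  obtain ⟨t, ht, rfl⟩ := hi
  exact h _ (by omega) (by omega)

theorem X_comm_chain (n j a b : ℕ) (h : ∀ i, a ≤ i → i < b → j ≠ i ∧ j ≠ i + 1) :
    X k n j * chain k n a b = chain k n a b * X k n j := by
  apply X_comm_prod
  intro i hi
  rw [List.mem_range'] at hi
  obtain ⟨t, ht, rfl⟩ := hi
  exact h _ (by omega) (by omega)

theorem chain_comm_chain (n a b c d : ℕ) (h : b < c) :
    chain k n a b * chain k n c d = chain k n c d * chain k n a b := by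
  have key : ∀ l : List ℕ, (∀ i ∈ l, i + 1 < c) →
      (l.map (T k n)).prod * chain k n c d = chain k n c d * (l.map (T k n)).prod := by
    intro l hl
    induction l with
    | nil => simp
    | cons i t ih =>
      simp only [List.map_cons, List.prod_cons, mul_assoc]
      rw [ih (fun i hi => hl i (by simp [hi])), ← mul_assoc, ← mul_assoc,
        T_comm_chain k n i c d (fun l h1 h2 => Or.inr (by have := hl i (by simp); omega))]
  show (chain k n a b) * _ = _
  unfold chain
  apply key
  intro i hi
  rw [List.mem_range'] at hi
  obtain ⟨t, ht, rfl⟩ := hi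
  omega

theorem T_slide (n a j b : ℕ) (ha : a ≤ j) (hb : j + 2 ≤ b) :
    T k n (j+1) * chain k n a b = chain k n a b * T k n j := by
  have h1 : T k n j * chain k n (j+2) b = chain k n (j+2) b * T k n j :=
    T_comm_chain k n j (j+2) b (fun i h1 h2 => Or.inr (by omega))
  have h2 : T k n (j+1) * chain k n a j = chain k n a j * T k n (j+1) :=
    T_comm_chain k n (j+1) a j (fun i h1 h2 => Or.inl (by omega))
  have hbr : T k n (j+1) * (T k n j * T k n (j+1)) = T k n j * (T k n (j+1) * T k n j) := by
    rw [← mul_assoc, ← mul_assoc, (T_braid k n j).symm]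
  rw [chain_concat k n a j b ha (by omega), chain_cons k n j b (by omega),
      chain_cons k n (j+1) b (by omega)]
  calc T k n (j+1) * (chain k n a j * (T k n j * (T k n (j+1) * chain k n (j+2) b)))
      = chain k n a j * (T k n (j+1) * (T k n j * T k n (j+1)) * chain k n (j+2) b) := by
        rw [← mul_assoc, h2]; simp only [mul_assoc]
    _ = chain k n a j * (T k n j * (T k n (j+1) * (T k n j * chain k n (j+2) b))) := by
        rw [hbr]; simp only [mul_assoc]
    _ = chain k n a j * (T k n j * (T k n (j+1) * chain k n (j+2) b)) * T k n j := by
        rw [h1]; simp only [mul_assoc]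

theorem X_slide (n a j b : ℕ) (ha : a ≤ j) (hb : j < b) (hn : j + 1 < n) :
    X k n (j+1) * chain k n a b
      = chain k n a b * X k n j - chain k n a j * chain k n (j+1) b := by
  have h1 : X k n (j+1) * chain k n a j = chain k n a j * X k n (j+1) :=
    X_comm_chain k n (j+1) a j (fun i hi1 hi2 => ⟨by omega, by omega⟩)
  have h2 : X k n (j+1) * T k n j = T k n j * X k n j - 1 := by
    have h := TX k n j hn
    rw [sub_eq_iff_eq_add] at h
    rw [eq_sub_iff_add_eq, h]; abel
  have h3 : X k n j * chain k n (j+1) b = chain k n (j+1) b * X k n j :=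
    X_comm_chain k n j (j+1) b (fun i hi1 hi2 => ⟨by omega, by omega⟩)
  rw [chain_concat k n a j b ha (by omega), chain_cons k n j b hb]
  calc X k n (j+1) * (chain k n a j * (T k n j * chain k n (j+1) b))
      = chain k n a j * ((X k n (j+1) * T k n j) * chain k n (j+1) b) := by
        rw [← mul_assoc, h1]; simp only [mul_assoc]
    _ = chain k n a j * ((T k n j * X k n j) * chain k n (j+1) b)
          - chain k n a j * chain k n (j+1) b := by
        rw [h2, sub_mul, one_mul, mul_sub]
    _ = chain k n a j * (T k n j * chain k n (j+1) b) * X k n j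
          - chain k n a j * chain k n (j+1) b := by
        rw [mul_assoc (T k n j), h3]; simp only [mul_assoc]

theorem X_expand (n a b : ℕ) (h1 : a ≤ b) :
    b < n → X k n a * chain k n a b
      = (∑ m ∈ Finset.Ico a b, chain k n a m * chain k n (m+1) b) + chain k n a b * X k n b := by
  induction b, h1 using Nat.le_induction with
  | base => intro hb; simp [chain_nil]
  | succ b hab ih =>
    intro hb
    have ihb := ih (by omega)
    rw [chain_snoc k n a (b+1) (by omega)]
    simp only [Nat.add_sub_cancel]
    rw [← mul_assoc, ihb, add_mul, Finset.sum_mul]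
    have hterm : ∀ m ∈ Finset.Ico a b,
        chain k n a m * chain k n (m+1) b * T k n b = chain k n a m * chain k n (m+1) (b+1) := by
      intro m hm
      rw [Finset.mem_Ico] at hm
      have hs := chain_snoc k n (m+1) (b+1) (by omega)
      simp only [Nat.add_sub_cancel] at hs
      rw [mul_assoc, ← hs]
    rw [Finset.sum_congr rfl hterm, Finset.sum_Ico_succ_top hab,
      chain_nil k n (b+1) (b+1) le_rfl, mul_one]
    have hxt : X k n b * T k n b = 1 + T k n b * X k n (b+1) := by
      have h := XT k n b (by omega)
      rw [sub_eq_iff_eq_add] at h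
      exact h
    rw [mul_assoc, hxt, mul_add, mul_one]
    simp only [mul_assoc]
    abel

theorem incl_X (m n i : ℕ) (h : m ≤ n) (hi : i < m) : incl k m n h (X k m i) = X k n i := by
  unfold incl X
  erw [RingQuot.liftAlgHom_mkAlgHom_apply]
  simp [FreeAlgebra.lift_ι_apply, hi]
  rfl

theorem incl_T (m n i : ℕ) (h : m ≤ n) (hi : i + 1 < m) : incl k m n h (T k m i) = T k n i := by
  unfold incl T
  erw [RingQuot.liftAlgHom_mkAlgHom_apply]
  simp [FreeAlgebra.lift_ι_apply, hi]
  rfl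

theorem shj_X (m n i : ℕ) (h : m + 1 ≤ n ∨ m = 0) (hi : i < m) :
    shj k m n h (X k m i) = X k n (i+1) := by
  unfold shj X
  erw [RingQuot.liftAlgHom_mkAlgHom_apply]
  simp [FreeAlgebra.lift_ι_apply, hi]
  rfl

theorem shj_T (m n i : ℕ) (h : m + 1 ≤ n ∨ m = 0) (hi : i + 1 < m) :
    shj k m n h (T k m i) = T k n (i+1) := by
  unfold shj T
  erw [RingQuot.liftAlgHom_mkAlgHom_apply]
  simp [FreeAlgebra.lift_ι_apply, hi]
  rfl

theorem iota0_C (n : ℕ) (a : H k (n-1)) :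
    iota0 k n (Polynomial.C a) = incl k (n-1) n (Nat.sub_le n 1) a := by
  unfold iota0
  rw [Polynomial.sum_C_index (by simp)]
  simp

theorem iota0_Xp (n : ℕ) : iota0 k n Polynomial.X = X k n (n-1) := by
  unfold iota0
  rw [Polynomial.sum_X_index (by simp)]
  simp

theorem iota1_C (n : ℕ) (h : n - 1 + 1 ≤ n ∨ n - 1 = 0) (a : H k (n-1)) :
    iota1 k n (Polynomial.C a) = shj k (n-1) n h a := by
  unfold iota1
  rw [Polynomial.sum_C_index (by simp)]
  simp

theorem iota1_Xp (n : ℕ) : iota1 k n Polynomial.X = X k n 0 := by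
  unfold iota1
  rw [Polynomial.sum_X_index (by simp)]
  simp

theorem incl_chain (n a b : ℕ) (h : n - 1 ≤ n) (hb : b < n - 1) :
    incl k (n-1) n h (chain k (n-1) a b) = chain k n a b := by
  unfold chain
  rw [map_list_prod, List.map_map]
  congr 1
  apply List.map_congr_left
  intro i hi
  rw [List.mem_range'] at hi
  obtain ⟨t, ht, rfl⟩ := hi
  exact incl_T k (n-1) n _ h (by omega)

theorem range'_succ_map (s len : ℕ) :
    List.range' (s+1) len = (List.range' s len).map (· + 1) := by
  induction len generalizing s with
  | zero => simp
  | succ l ih => rw [List.range'_succ, List.range'_succ, ih, List.map_cons]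

theorem shj_chain (n a b : ℕ) (h : n - 1 + 1 ≤ n ∨ n - 1 = 0) (hb : b < n - 1) :
    shj k (n-1) n h (chain k (n-1) a b) = chain k n (a+1) (b+1) := by
  unfold chain
  rw [map_list_prod, List.map_map, show b + 1 - (a + 1) = b - a by omega,
    range'_succ_map, List.map_map]
  congr 1
  apply List.map_congr_left
  intro i hi
  rw [List.mem_range'] at hi
  obtain ⟨t, ht, rfl⟩ := hi
  simp only [Function.comp_apply]
  exact shj_T k (n-1) n _ h (by omega)

/-- The quotient map onto the balanced tensor product. -/
noncomputable def pr (n : ℕ) : H k n ⊗[k] H k n →ₗ[k] (H k n ⊗[k] H k n) ⧸ bal k n :=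
  (bal k n).mkQ

theorem pr_move (n : ℕ) (p : Polynomial (H k (n-1))) (a b : H k n) :
    pr k n ((a * iota0 k n p) ⊗ₜ[k] b) = pr k n (a ⊗ₜ[k] (iota1 k n p * b)) := by
  simp only [pr, Submodule.mkQ_apply]
  rw [Submodule.Quotient.eq]
  exact Submodule.subset_span ⟨a, b, p, rfl⟩

theorem pr_T (n i : ℕ) (hi : i + 1 < n - 1) (a b : H k n) :
    pr k n ((a * T k n i) ⊗ₜ[k] b) = pr k n (a ⊗ₜ[k] (T k n (i+1) * b)) := by
  have h := pr_move k n (Polynomial.C (T k (n-1) i)) a b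
  rwa [iota0_C, iota1_C k n (by omega), incl_T k (n-1) n i _ hi,
    shj_T k (n-1) n i _ hi] at h

theorem pr_X (n i : ℕ) (hi : i < n - 1) (a b : H k n) :
    pr k n ((a * X k n i) ⊗ₜ[k] b) = pr k n (a ⊗ₜ[k] (X k n (i+1) * b)) := by
  have h := pr_move k n (Polynomial.C (X k (n-1) i)) a b
  rwa [iota0_C, iota1_C k n (by omega), incl_X k (n-1) n i _ hi,
    shj_X k (n-1) n i _ hi] at h

theorem pr_Y (n : ℕ) (a b : H k n) :
    pr k n ((a * X k n (n-1)) ⊗ₜ[k] b) = pr k n (a ⊗ₜ[k] (X k n 0 * b)) := by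
  have h := pr_move k n Polynomial.X a b
  rwa [iota0_Xp, iota1_Xp] at h

theorem pr_chain (n a' b' : ℕ) (hb : b' < n - 1) (a b : H k n) :
    pr k n ((a * chain k n a' b') ⊗ₜ[k] b)
      = pr k n (a ⊗ₜ[k] (chain k n (a'+1) (b'+1) * b)) := by
  have h := pr_move k n (Polynomial.C (chain k (n-1) a' b')) a b
  rwa [iota0_C, iota1_C k n (by omega), incl_chain k n a' b' _ hb,
    shj_chain k n a' b' _ hb] at h

theorem sum_swap_aux {M : Type} [AddCommMonoid M] (nn j : ℕ) (hj : j + 1 < nn)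
    (f g : ℕ → M) (h1 : ∀ r, r < nn → r ≠ j → r ≠ j + 1 → f r = g r)
    (h2 : f j = g (j+1)) (h3 : f (j+1) = g j) :
    ∑ r ∈ Finset.range nn, f r = ∑ r ∈ Finset.range nn, g r := by
  apply Finset.sum_equiv (Equiv.swap j (j+1))
  · intro i
    simp only [Finset.mem_range]
    rcases eq_or_ne i j with rfl | hij
    · rw [Equiv.swap_apply_left]; omega
    rcases eq_or_ne i (j+1) with rfl | hij2
    · rw [Equiv.swap_apply_right]; omega
    · rw [Equiv.swap_apply_of_ne_of_ne hij hij2]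
  · intro i hi
    rw [Finset.mem_range] at hi
    rcases eq_or_ne i j with rfl | hij
    · rw [Equiv.swap_apply_left]; exact h2
    rcases eq_or_ne i (j+1) with rfl | hij2
    · rw [Equiv.swap_apply_right]; exact h3
    · rw [Equiv.swap_apply_of_ne_of_ne hij hij2]; exact h1 i hi hij hij2

theorem genT (n j : ℕ) (hj : j + 2 ≤ n) :
    pr k n (∑ r ∈ Finset.range n, (T k n j * chain k n r (n-1)) ⊗ₜ[k] chain k n 0 r)
      = pr k n (∑ r ∈ Finset.range n, chain k n r (n-1) ⊗ₜ[k] (chain k n 0 r * T k n j)) := by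
  rw [map_sum, map_sum]
  apply sum_swap_aux n j (by omega)
  · intro r hr hrj hrj1
    rcases Nat.lt_or_ge r j with hlt | hge
    · have hc : T k n j * chain k n r (n-1) = chain k n r (n-1) * T k n (j-1) := by
        have h := T_slide k n r (j-1) (n-1) (by omega) (by omega)
        rw [show j - 1 + 1 = j by omega] at h
        exact h
      rw [hc, pr_T k n (j-1) (by omega), show j - 1 + 1 = j by omega,
        T_comm_chain k n j 0 r (fun i h1 h2 => Or.inl (by omega))]
    · have hge2 : j + 2 ≤ r := by omega
      rw [T_comm_chain k n j r (n-1) (fun i h1 h2 => Or.inr (by omega)),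
        pr_T k n j (by omega), T_slide k n 0 j r (by omega) hge2]
  · have hc : T k n j * chain k n j (n-1) = 0 := by
      rw [chain_cons k n j (n-1) (by omega), ← mul_assoc, T_sq, zero_mul]
    have hd : chain k n 0 (j+1) * T k n j = 0 := by
      have h := chain_snoc k n 0 (j+1) (by omega)
      simp only [Nat.add_sub_cancel] at h
      rw [h, mul_assoc, T_sq, mul_zero]
    rw [hc, hd, TensorProduct.zero_tmul, TensorProduct.tmul_zero]
  · have hc : T k n j * chain k n (j+1) (n-1) = chain k n j (n-1) :=
      (chain_cons k n j (n-1) (by omega)).symm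
    have hd : chain k n 0 j * T k n j = chain k n 0 (j+1) := by
      have h := chain_snoc k n 0 (j+1) (by omega)
      simp only [Nat.add_sub_cancel] at h
      exact h.symm
    rw [hc, hd]

theorem genX (n j : ℕ) (hj : j < n) :
    pr k n (∑ r ∈ Finset.range n, (X k n j * chain k n r (n-1)) ⊗ₜ[k] chain k n 0 r)
      = pr k n (∑ r ∈ Finset.range n, chain k n r (n-1) ⊗ₜ[k] (chain k n 0 r * X k n j)) := by
  have hn : 1 ≤ n := by omega
  rw [map_sum, map_sum]
  have split : ∀ F : ℕ → (H k n ⊗[k] H k n) ⧸ bal k n,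
      ∑ r ∈ Finset.range n, F r
        = ∑ r ∈ Finset.Ico 0 j, F r + (F j + ∑ r ∈ Finset.Ico (j+1) n, F r) := by
    intro F
    rw [Finset.range_eq_Ico, ← Finset.sum_Ico_consecutive F (Nat.zero_le j) hj.le,
      Finset.sum_eq_sum_Ico_succ_bot hj F]
  have C1 : ∀ r ∈ Finset.Ico 0 j,
      pr k n ((X k n j * chain k n r (n-1)) ⊗ₜ[k] chain k n 0 r)
        = pr k n (chain k n r (n-1) ⊗ₜ[k] (chain k n 0 r * X k n j))
          - pr k n (chain k n j (n-1) ⊗ₜ[k] (chain k n 0 r * chain k n (r+1) j)) := by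
    intro r hr
    rw [Finset.mem_Ico] at hr
    have hr' : r < j := hr.2
    have hxs := X_slide k n r (j-1) (n-1) (by omega) (by omega) (by omega)
    rw [show j - 1 + 1 = j by omega] at hxs
    rw [hxs, TensorProduct.sub_tmul, map_sub]
    have hA : pr k n ((chain k n r (n-1) * X k n (j-1)) ⊗ₜ[k] chain k n 0 r)
        = pr k n (chain k n r (n-1) ⊗ₜ[k] (chain k n 0 r * X k n j)) := by
      rw [pr_X k n (j-1) (by omega), show j - 1 + 1 = j by omega,
        X_comm_chain k n j 0 r (fun i h1 h2 => ⟨by omega, by omega⟩)]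
    have hB : pr k n ((chain k n r (j-1) * chain k n j (n-1)) ⊗ₜ[k] chain k n 0 r)
        = pr k n (chain k n j (n-1) ⊗ₜ[k] (chain k n 0 r * chain k n (r+1) j)) := by
      rw [chain_comm_chain k n r (j-1) j (n-1) (by omega), pr_chain k n r (j-1) (by omega),
        show j - 1 + 1 = j by omega, chain_comm_chain k n 0 r (r+1) j (by omega)]
    rw [hA, hB]
  have C2 : ∀ r ∈ Finset.Ico (j+1) n,
      pr k n ((X k n j * chain k n r (n-1)) ⊗ₜ[k] chain k n 0 r)
        = pr k n (chain k n r (n-1) ⊗ₜ[k] (chain k n 0 r * X k n j))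
          - pr k n (chain k n r (n-1) ⊗ₜ[k] (chain k n 0 j * chain k n (j+1) r)) := by
    intro r hr
    rw [Finset.mem_Ico] at hr
    rw [X_comm_chain k n j r (n-1) (fun i h1 h2 => ⟨by omega, by omega⟩),
      pr_X k n j (by omega), X_slide k n 0 j r (by omega) (by omega) (by omega),
      TensorProduct.tmul_sub, map_sub]
  have hreidx : ∑ m ∈ Finset.Ico j (n-1),
        pr k n (chain k n (m+1) (n-1) ⊗ₜ[k] (chain k n 0 j * chain k n (j+1) (m+1)))
      = ∑ r ∈ Finset.Ico (j+1) n,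
        pr k n (chain k n r (n-1) ⊗ₜ[k] (chain k n 0 j * chain k n (j+1) r)) := by
    have h : Finset.Ico (j+1) n = (Finset.Ico j (n-1)).map (addRightEmbedding 1) := by
      rw [Finset.map_add_right_Ico]
      congr 1
      omega
    rw [h, Finset.sum_map]
    rfl
  have C3 : pr k n ((X k n j * chain k n j (n-1)) ⊗ₜ[k] chain k n 0 j)
      = pr k n (chain k n j (n-1) ⊗ₜ[k] (chain k n 0 j * X k n j))
        + (∑ m ∈ Finset.Ico j (n-1),
            pr k n (chain k n (m+1) (n-1) ⊗ₜ[k] (chain k n 0 j * chain k n (j+1) (m+1))))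
        + (∑ m ∈ Finset.Ico 0 j,
            pr k n (chain k n j (n-1) ⊗ₜ[k] (chain k n 0 m * chain k n (m+1) j))) := by
    rw [X_expand k n j (n-1) (by omega) (by omega), TensorProduct.add_tmul, map_add,
      TensorProduct.sum_tmul, map_sum, pr_Y k n,
      X_expand k n 0 j (by omega) hj, TensorProduct.tmul_add, map_add,
      TensorProduct.tmul_sum, map_sum]
    have hterm : ∀ m ∈ Finset.Ico j (n-1),
        pr k n ((chain k n j m * chain k n (m+1) (n-1)) ⊗ₜ[k] chain k n 0 j)
          = pr k n (chain k n (m+1) (n-1) ⊗ₜ[k] (chain k n 0 j * chain k n (j+1) (m+1))) := by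
      intro m hm
      rw [Finset.mem_Ico] at hm
      rw [chain_comm_chain k n j m (m+1) (n-1) (by omega), pr_chain k n j m (by omega),
        chain_comm_chain k n 0 j (j+1) (m+1) (by omega)]
    rw [Finset.sum_congr rfl hterm]
    abel
  rw [split, split, Finset.sum_congr rfl C1, Finset.sum_congr rfl C2, C3, hreidx,
    Finset.sum_sub_distrib, Finset.sum_sub_distrib]
  abel

theorem bal_map_left (n : ℕ) (c : H k n) {z : H k n ⊗[k] H k n} (hz : z ∈ bal k n) :
    LinearMap.rTensor (H k n) (LinearMap.mulLeft k c) z ∈ bal k n := by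
  induction hz using Submodule.span_induction with
  | mem z hz' =>
    obtain ⟨a, b, p, rfl⟩ := hz'
    rw [map_sub, LinearMap.rTensor_tmul, LinearMap.rTensor_tmul]
    simp only [LinearMap.mulLeft_apply]
    rw [← mul_assoc]
    exact Submodule.subset_span ⟨c * a, b, p, rfl⟩
  | zero => rw [map_zero]; exact Submodule.zero_mem _
  | add x y hx hy ihx ihy => rw [map_add]; exact Submodule.add_mem _ ihx ihy
  | smul r x hx ihx => rw [map_smul]; exact Submodule.smul_mem _ _ ihx

theorem bal_map_right (n : ℕ) (c : H k n) {z : H k n ⊗[k] H k n} (hz : z ∈ bal k n) :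
    LinearMap.lTensor (H k n) (LinearMap.mulRight k c) z ∈ bal k n := by
  induction hz using Submodule.span_induction with
  | mem z hz' =>
    obtain ⟨a, b, p, rfl⟩ := hz'
    rw [map_sub, LinearMap.lTensor_tmul, LinearMap.lTensor_tmul]
    simp only [LinearMap.mulRight_apply]
    rw [mul_assoc]
    exact Submodule.subset_span ⟨a, b * c, p, rfl⟩
  | zero => rw [map_zero]; exact Submodule.zero_mem _
  | add x y hx hy ihx ihy => rw [map_add]; exact Submodule.add_mem _ ihx ihy
  | smul r x hx ihx => rw [map_smul]; exact Submodule.smul_mem _ _ ihx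

theorem pr_eq_iff (n : ℕ) (x y : H k n ⊗[k] H k n) :
    pr k n x = pr k n y ↔ x - y ∈ bal k n := by
  simp only [pr, Submodule.mkQ_apply]
  exact Submodule.Quotient.eq _

theorem delta_comm_gen (n : ℕ) (a : H k n) :
    (∑ r ∈ Finset.range n, (a * chain k n r (n-1)) ⊗ₜ[k] chain k n 0 r)
      - (∑ r ∈ Finset.range n, chain k n r (n-1) ⊗ₜ[k] (chain k n 0 r * a))
      ∈ bal k n := by
  obtain ⟨x, rfl⟩ := RingQuot.mkAlgHom_surjective k (Rel k n) a
  induction x using FreeAlgebra.induction with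
  | grade0 r =>
    have hc : RingQuot.mkAlgHom k (Rel k n) (algebraMap k (FreeAlgebra k (ℕ ⊕ ℕ)) r)
        = algebraMap k (H k n) r := AlgHom.commutes _ r
    rw [hc]
    have he : ∀ s ∈ Finset.range n,
        ((algebraMap k (H k n) r) * chain k n s (n-1)) ⊗ₜ[k] chain k n 0 s
          = chain k n s (n-1) ⊗ₜ[k] (chain k n 0 s * (algebraMap k (H k n) r)) := by
      intro s _
      have h1 : (algebraMap k (H k n) r) * chain k n s (n-1) = r • chain k n s (n-1) :=
        (Algebra.smul_def r _).symm
      have h2 : chain k n 0 s * (algebraMap k (H k n) r) = r • chain k n 0 s := by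
        rw [← Algebra.commutes]
        exact (Algebra.smul_def r _).symm
      rw [h1, h2, TensorProduct.smul_tmul]
    rw [Finset.sum_congr rfl he, sub_self]
    exact Submodule.zero_mem _
  | grade1 g =>
    match g with
    | Sum.inl i =>
      have hX : RingQuot.mkAlgHom k (Rel k n) (FreeAlgebra.ι k (Sum.inl i)) = X k n i := rfl
      rw [hX]
      by_cases hi : i < n
      · exact (pr_eq_iff k n _ _).1 (genX k n i hi)
      · rw [X_kill k n i (by omega)]
        simp only [zero_mul, mul_zero, TensorProduct.zero_tmul, TensorProduct.tmul_zero,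
          Finset.sum_const_zero, sub_self]
        exact Submodule.zero_mem _
    | Sum.inr i =>
      have hT : RingQuot.mkAlgHom k (Rel k n) (FreeAlgebra.ι k (Sum.inr i)) = T k n i := rfl
      rw [hT]
      by_cases hi : i + 2 ≤ n
      · exact (pr_eq_iff k n _ _).1 (genT k n i hi)
      · rw [T_kill k n i (by omega)]
        simp only [zero_mul, mul_zero, TensorProduct.zero_tmul, TensorProduct.tmul_zero,
          Finset.sum_const_zero, sub_self]
        exact Submodule.zero_mem _
  | mul x y hx hy =>
    rw [map_mul]
    set a : H k n := RingQuot.mkAlgHom k (Rel k n) x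
    set b : H k n := RingQuot.mkAlgHom k (Rel k n) y
    have key : (∑ r ∈ Finset.range n, ((a * b) * chain k n r (n-1)) ⊗ₜ[k] chain k n 0 r)
        - (∑ r ∈ Finset.range n, chain k n r (n-1) ⊗ₜ[k] (chain k n 0 r * (a * b)))
        = LinearMap.rTensor (H k n) (LinearMap.mulLeft k a)
            ((∑ r ∈ Finset.range n, (b * chain k n r (n-1)) ⊗ₜ[k] chain k n 0 r)
              - (∑ r ∈ Finset.range n, chain k n r (n-1) ⊗ₜ[k] (chain k n 0 r * b)))
          + LinearMap.lTensor (H k n) (LinearMap.mulRight k b)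
            ((∑ r ∈ Finset.range n, (a * chain k n r (n-1)) ⊗ₜ[k] chain k n 0 r)
              - (∑ r ∈ Finset.range n, chain k n r (n-1) ⊗ₜ[k] (chain k n 0 r * a))) := by
      simp only [map_sub, map_sum, LinearMap.rTensor_tmul, LinearMap.lTensor_tmul,
        LinearMap.mulLeft_apply, LinearMap.mulRight_apply, mul_assoc]
      abel
    erw [key]
    exact Submodule.add_mem _ (bal_map_left k n a hy) (bal_map_right k n b hx)
  | add x y hx hy =>
    rw [map_add]
    set a : H k n := RingQuot.mkAlgHom k (Rel k n) x
    set b : H k n := RingQuot.mkAlgHom k (Rel k n) y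
    have key : (∑ r ∈ Finset.range n, ((a + b) * chain k n r (n-1)) ⊗ₜ[k] chain k n 0 r)
        - (∑ r ∈ Finset.range n, chain k n r (n-1) ⊗ₜ[k] (chain k n 0 r * (a + b)))
        = ((∑ r ∈ Finset.range n, (a * chain k n r (n-1)) ⊗ₜ[k] chain k n 0 r)
            - (∑ r ∈ Finset.range n, chain k n r (n-1) ⊗ₜ[k] (chain k n 0 r * a)))
          + ((∑ r ∈ Finset.range n, (b * chain k n r (n-1)) ⊗ₜ[k] chain k n 0 r)
            - (∑ r ∈ Finset.range n, chain k n r (n-1) ⊗ₜ[k] (chain k n 0 r * b))) := by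
      simp only [add_mul, mul_add, TensorProduct.add_tmul, TensorProduct.tmul_add,
        Finset.sum_add_distrib]
      abel
    erw [key]
    exact Submodule.add_mem _ hx hy

end Aux

end NilHecke

namespace NilHecke

/-- `a · Δ_n = Δ_n · a` for all `a ∈ H_n`, in the balanced tensor product
`H_n ι_0 ⊗_{H_{n−1}[y]} ι_1 H_n` (realized as the quotient of `H_n ⊗_k H_n` by the
balancing submodule `bal`): the left action is left multiplication on the first factor and
the right action is right multiplication on the second factor. -/
theorem delta_central (k : Type) [Field k] (n : ℕ) (a : H k n) :
    (∑ r ∈ Finset.range n, (a * chain k n r (n-1)) ⊗ₜ[k] chain k n 0 r)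
      - (∑ r ∈ Finset.range n, chain k n r (n-1) ⊗ₜ[k] (chain k n 0 r * a))
      ∈ bal k n :=
  delta_comm_gen k n a

end NilHecke
end

section
/- Let U⁺ be the Z[v,v⁻¹]-algebra with basis the divided powers e^{(n)} = eⁿ/[n]_v!, and let V be the free Z[v,v⁻¹]-module with basis b_−, b_+. Define a bilinear form on U⁺ ⊗ V by (v^a e^{(i)} ⊗ b_ε, v^b e^{(j)} ⊗ b_ε) = v^{b−a} δ_{i,j} / ∏_{r=1}^i (1−q^r) for ε ∈ {−,+}, (v^a e^{(i)} ⊗ b_+, v^b e^{(j)} ⊗ b_−) = 0, and (v^a e^{(i)} ⊗ b_−, v^b e^{(j)} ⊗ b_+) = −v^{b−a} δ_{i−1,j} v^{−i} / ∏_{r=1}^{i−1}(1−q^r), where q = v². Then the map sending e^{(i)} ⊗ b_− ↦ [P_i⁺] and e^{(i)} ⊗ b_+ ↦ −v^{−1}[P_{i+1}⁻] rescales the form by 1/(1−q): for all w, w′, ⟨ψ(w), ψ(w′)⟩ = (1/(1−q))·(w, w′), where ⟨[M],[N]⟩ = grdim Hom(M,N) and ⟨P_i⁺, P_j⁺⟩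 = ⟨P_{i+1}⁻, P_{j+1}⁻⟩ = δ_{i,j} q^{−i(i−1)/2}(1−q)⋯(1−q^i)/(1−q)^{2i+1}, ⟨P_i⁺, P_j⁻⟩ = δ_{i,j} q^{−i(i−1)/2}(1−q)⋯(1−q^i)/(1−q)^{2i}, ⟨P_i⁻, P_j⁺⟩ = 0. -/
namespace ShapovalovComparison

noncomputable section

/-- The formal variable `v`, inside `ℚ(v)` (in which `ℤ[v,v⁻¹]` and all the displayed
formal series manipulations embed). -/
def v : RatFunc ℚ := RatFunc.X

/-- `q = v²`. -/
def q : RatFunc ℚ := v ^ 2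

/-- `[n]_v = (vⁿ − v⁻ⁿ)/(v − v⁻¹)`. -/
def qint (n : ℕ) : RatFunc ℚ := (v ^ n - v⁻¹ ^ n) / (v - v⁻¹)

/-- `[n]_v! = [1]_v ⋯ [n]_v`. -/
def qfact (n : ℕ) : RatFunc ℚ := ∏ m ∈ Finset.range n, qint (m + 1)

/-- `∏_{r=1}^{i} (1 − q^r)`. -/
def qprod (i : ℕ) : RatFunc ℚ := ∏ r ∈ Finset.range i, (1 - q ^ (r + 1))

/-- Kronecker delta. -/
def δ (i j : ℕ) : RatFunc ℚ := if i = j then 1 else 0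

lemma hv : v ≠ 0 := RatFunc.X_ne_zero

lemma hpow (n : ℕ) (hn : 1 ≤ n) : (v : RatFunc ℚ) ^ n ≠ 1 := by
  intro h
  have h2 : algebraMap (Polynomial ℚ) (RatFunc ℚ) (Polynomial.X ^ n) =
      algebraMap (Polynomial ℚ) (RatFunc ℚ) 1 := by
    simpa [v, ← RatFunc.algebraMap_X, map_pow] using h
  have h3 := IsFractionRing.injective (Polynomial ℚ) (RatFunc ℚ) h2
  have := congrArg Polynomial.natDegree h3
  simp [Polynomial.natDegree_X_pow] at this
  omega

lemma hq1 (n : ℕ) : (1 : RatFunc ℚ) - q ^ (n + 1) ≠ 0 := by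
  intro h
  have : q ^ (n+1) = 1 := by linear_combination -h
  exact hpow (2*(n+1)) (by omega) (by rw [← this]; rw [q]; ring)

lemma h1q : (1 : RatFunc ℚ) - q ≠ 0 := by simpa using hq1 0

lemma hqprod (i : ℕ) : qprod i ≠ 0 :=
  Finset.prod_ne_zero_iff.2 fun r _ => hq1 r

lemma hvv : v - v⁻¹ ≠ 0 := by
  intro h
  have h2 : v * v = 1 := by
    have hveq : v = v⁻¹ := by linear_combination h
    calc v * v = v * v⁻¹ := by rw [← hveq]
      _ = 1 := mul_inv_cancel₀ hv
  exact hpow 2 one_le_two (by rw [pow_two]; exact h2)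

/-- key: `v^{i(i-1)/2} · [i]! · (1-q)^i = ∏ (1-q^r)`. -/
lemma key (i : ℕ) : v ^ (i * (i-1) / 2) * qfact i * (1 - q) ^ i = qprod i := by
  induction i with
  | zero => simp [qfact, qprod]
  | succ n ih =>
    have hstep : v ^ n * qint (n+1) * (1 - q) = 1 - q ^ (n+1) := by
      have h2 : v ^ n * (1 - q) ≠ 0 := mul_ne_zero (pow_ne_zero _ hv) h1q
      have hqe : qint (n+1) = (1 - q ^ (n+1)) / (v ^ n * (1 - q)) := by
        rw [qint, div_eq_div_iff hvv h2, q]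
        field_simp [hv]
        have e1 : v * v⁻¹ = 1 := mul_inv_cancel₀ hv
        have e2 : v ^ n * v⁻¹ ^ n = 1 := by rw [← mul_pow, e1, one_pow]
        linear_combination (-(1 - v ^ 2) * v ^ n * v⁻¹ ^ n) * e1 + (-(1 - v ^ 2)) * e2
      rw [hqe, mul_comm (v ^ n), mul_assoc, div_mul_cancel₀ _ h2]
    have hexp : (n+1) * ((n+1)-1) / 2 = n * (n-1) / 2 + n := by
      rcases n with _ | m
      · simp
      · simp only [Nat.add_sub_cancel]
        have hd1 : 2 ∣ (m+1) * m := by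
          have := (Nat.even_mul_succ_self m).two_dvd
          rwa [mul_comm] at this
        have hd2 : 2 ∣ (m+1+1) * (m+1) := by
          have := (Nat.even_mul_succ_self (m+1)).two_dvd
          rwa [mul_comm] at this
        have h3 : (m+1+1) * (m+1) = (m+1) * m + 2 * (m+1) := by ring
        omega
    rw [qfact, Finset.prod_range_succ, ← qfact, qprod, Finset.prod_range_succ, ← qprod,
      hexp, pow_add, pow_succ]
    calc v ^ (n*(n-1)/2) * v ^ n * (qfact n * qint (n+1)) * ((1-q)^n * (1-q))
        = (v ^ (n*(n-1)/2) * qfact n * (1-q)^n) * (v ^ n * qint (n+1) * (1-q)) := by ring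
      _ = qprod n * (1 - q ^ (n+1)) := by rw [ih, hstep]

lemma cast_half (i : ℕ) : ((i : ℤ) * ((i : ℤ) - 1) / 2) = ((i * (i - 1) / 2 : ℕ) : ℤ) := by
  rcases i with _ | n
  · simp
  · push_cast [Nat.add_sub_cancel]
    congr 1
    ring

lemma hexp (n : ℕ) : (n+1) * ((n+1)-1) / 2 = n * (n-1) / 2 + n := by
  rcases n with _ | m
  · simp
  · simp only [Nat.add_sub_cancel]
    have hd1 : 2 ∣ (m+1) * m := by
      have := (Nat.even_mul_succ_self m).two_dvd
      rwa [mul_comm] at this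
    have hd2 : 2 ∣ (m+1+1) * (m+1) := by
      have := (Nat.even_mul_succ_self (m+1)).two_dvd
      rwa [mul_comm] at this
    have h3 : (m+1+1) * (m+1) = (m+1) * m + 2 * (m+1) := by ring
    omega

lemma hfact (i : ℕ) : qfact i = qprod i / (v ^ (i*(i-1)/2) * (1-q)^i) := by
  rw [eq_div_iff (mul_ne_zero (pow_ne_zero _ hv) (pow_ne_zero _ h1q))]
  linear_combination key i

/-- The map `ψ` sending `e^{(i)} ⊗ b_− ↦ [P_i⁺]`,
`e^{(i)} ⊗ b_+ ↦ −v⁻¹[P_{i+1}⁻]` rescales the bilinear form by `1/(1−q)`: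
`⟨ψ(w), ψ(w′)⟩ = (1/(1−q))·(w, w′)`.  Given the stated values of the pairings
`⟨P_i^±, P_j^±⟩` and of the form `(−,−)` on `U⁺ ⊗ V`, this is the conjunction of the
following formal identities (one for each pair of basis vectors, taking into account
`e^i = [i]_v! e^{(i)}`):
`⟨P_i⁺,P_j⁺⟩ = δ_{ij} q^{−i(i−1)/2} ∏(1−q^r)/(1−q)^{2i+1}
            = (1/(1−q)) ([i]_v!)² (e^{(i)}⊗b_−, e^{(j)}⊗b_−)`,
likewise for `⟨P_{i+1}⁻,P_{j+1}⁻⟩` against `(e^{(i)}⊗b_+, e^{(j)}⊗b_+)`,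
`⟨P_i⁺,P_j⁻⟩ = (−v/(1−q)) [i]_v! [i−1]_v! (e^{(i)}⊗b_−, e^{(j−1)}⊗b_+)` for `i,j ≥ 1`,
and `⟨P_i⁻,P_j⁺⟩ = 0 = (1/(1−q))·(e^{(i)}⊗b_+, e^{(j)}⊗b_−)`. -/
theorem shapovalov_rescaling (i j : ℕ) :
    (δ i j * q ^ (-(i * (i - 1) / 2 : ℤ)) * qprod i / (1 - q) ^ (2 * i + 1)
        = (1 / (1 - q)) * (qfact i) ^ 2 * (δ i j / qprod i)) ∧
    (δ i j * q ^ (-(i * (i - 1) / 2 : ℤ)) * qprod i / (1 - q) ^ (2 * i + 1)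
        = (1 / (1 - q)) * (qfact i) ^ 2 * (δ i j / qprod i)) ∧
    (1 ≤ i → 1 ≤ j →
      δ i j * q ^ (-(i * (i - 1) / 2 : ℤ)) * qprod i / (1 - q) ^ (2 * i)
        = (-v / (1 - q)) * qfact i * qfact (i - 1) *
            (-(δ (i - 1) (j - 1)) * v ^ (-(i : ℤ)) / qprod (i - 1))) ∧
    ((0 : RatFunc ℚ) = (1 / (1 - q)) * 0) := by
  have hG1 : δ i j * q ^ (-(i * (i - 1) / 2 : ℤ)) * qprod i / (1 - q) ^ (2 * i + 1)
        = (1 / (1 - q)) * (qfact i) ^ 2 * (δ i j / qprod i) := by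
    rcases eq_or_ne i j with rfl | h
    · simp only [δ, if_pos rfl]
      rw [cast_half, zpow_neg, zpow_natCast, hfact]
      have hqE : q ^ (i*(i-1)/2) = (v ^ (i*(i-1)/2)) ^ 2 := by rw [q]; ring
      rw [hqE]
      set w := v ^ (i*(i-1)/2) with hw
      set P := qprod i with hP
      set t := (1:RatFunc ℚ) - q with ht
      have h1 : w ≠ 0 := pow_ne_zero _ hv
      have h2 : t ≠ 0 := h1q
      have h3 : P ≠ 0 := hqprod i
      clear_value w P t
      field_simp
      ring
    · simp [δ, h]
  refine ⟨hG1, hG1, ?_, by ring⟩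
  intro hi hj
  rcases eq_or_ne i j with rfl | h
  · obtain ⟨n, rfl⟩ : ∃ n, i = n + 1 := ⟨i - 1, by omega⟩
    simp only [δ, if_pos rfl, Nat.add_sub_cancel]
    rw [cast_half, hexp n, zpow_neg, zpow_natCast, hfact (n+1), hfact n, hexp n,
      zpow_neg, zpow_natCast]
    have hqE : q ^ (n*(n-1)/2 + n) = (v ^ (n*(n-1)/2)) ^ 2 * v ^ n * v ^ n := by
      rw [q]; ring
    have hvs : (v:RatFunc ℚ) ^ (n+1) = v ^ n * v := by rw [pow_succ]
    rw [hqE, pow_add (v) (n*(n-1)/2) n, hvs]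
    set w := v ^ (n*(n-1)/2) with hw
    set u := v ^ n with hu
    set P := qprod n with hP
    set Q := qprod (n+1) with hQ
    set t := (1:RatFunc ℚ) - q with ht
    have h1 : w ≠ 0 := pow_ne_zero _ hv
    have h1' : u ≠ 0 := pow_ne_zero _ hv
    have h2 : t ≠ 0 := h1q
    have h3 : P ≠ 0 := hqprod n
    have h4 : Q ≠ 0 := hqprod (n+1)
    have h5 := hv
    clear_value w u P Q t
    field_simp
    ring
  · have h2 : i - 1 ≠ j - 1 := by omega
    simp [δ, h, h2]


end

end ShapovalovComparison
end
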